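/- Let A be a commutative ring, S ⊆ A a multiplicative set, and Q an ideal of A disjoint from S that is strongly weakly S-prime with associated element s ∈ S. If a, b ∈ A satisfy ab = 0 but sa ∉ Q and sb ∉ Q, then for all q, q′ ∈ Q, qq′ = 0 (i.e., Q·Q = 0 under these hypotheses on a, b). -/

import Mathlib

/-- If Q is strongly weakly S-prime associated to s and ab = 0 with
sa ∉ Q, sb ∉ Q, then qq' = 0 for all q, q' ∈ Q. -/
theorem stmt_6 {A : Type*} [CommRing A] (S : Set A)
    (hS : ∀ a ∈ S, ∀ b ∈ S, a * b ∈ S) (Q : Ideal A)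
    (hdisj : (Q : Set A) ∩ S = ∅) (s : A) (hs : s ∈ S)
    (hQ : ∀ I J : Ideal A, I * J ≠ ⊥ → I * J ≤ Q →
        (∀ x ∈ I, s * x ∈ Q) ∨ (∀ x ∈ J, s * x ∈ Q))
    (a b : A) (hab : a * b = 0) (ha : s * a ∉ Q) (hb : s * b ∉ Q) :
    ∀ q ∈ Q, ∀ q' ∈ Q, q * q' = 0 := by
  intro q hq q' hq'
  by_contra hne
  set I : Ideal A := Ideal.span {a} ⊔ Q with hI
  set J : Ideal A := Ideal.span {b} ⊔ Q with hJ
  have haI : a ∈ I := Ideal.mem_sup_left (Ideal.subset_span rfl)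
  have hbJ : b ∈ J := Ideal.mem_sup_left (Ideal.subset_span rfl)
  have hIJle : I * J ≤ Q := by
    rw [hI, hJ, Ideal.sup_mul, Ideal.mul_sup, Ideal.mul_sup]
    apply sup_le
    · apply sup_le
      · rw [Ideal.span_singleton_mul_span_singleton, hab, Ideal.span_singleton_eq_bot.mpr rfl]
        exact bot_le
      · exact Ideal.mul_le_right
    · apply sup_le
      · exact Ideal.mul_le_left
      · exact Ideal.mul_le_left
  have hmem : q * q' ∈ I * J :=
    Ideal.mul_mem_mul (Ideal.mem_sup_right hq) (Ideal.mem_sup_right hq')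
  have hne' : I * J ≠ ⊥ := fun h => hne (by simpa [h, Ideal.mem_bot] using hmem)
  rcases hQ I J hne' hIJle with h | h
  · exact ha (h a haI)
  · exact hb (h b hbJ)
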